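/- arXiv:2412.19144 — 3 statements merged into one kernel-verified Lean document; each statement's English description precedes it below -/
import Mathlib

section
/- Let G be a connected graph with at least one edge, T a connected bipartite graph, f : G → T a graph homomorphism, and η a multi-homomorphism from G to T lying in the same connected component of the poset Hom(G,T) as f. Then for every x ∈ V(G) and every y ∈ η(x), the graph distance d_T(f(x), y) is even. -/
structure Graph' where
  V : Type
  E : V → V → Prop
  symm : ∀ {x y}, E x y → E y x

def IsGraphHom (G H : Graph') (f : G.V → H.V) : Prop :=
  ∀ {x y}, G.E x y → H.E (f x) (f y)

structure Walk (G : Graph') (a b : G.V) where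
  len : ℕ
  toFun : ℕ → G.V
  start_eq : toFun 0 = a
  end_eq : toFun len = b
  adj : ∀ i, i < len → G.E (toFun i) (toFun (i + 1))

structure MultiHom (G H : Graph') where
  toFun : G.V → Set H.V
  nonempty : ∀ x, (toFun x).Nonempty
  edge : ∀ {x y}, G.E x y → ∀ a ∈ toFun x, ∀ b ∈ toFun y, H.E a b

def MultiHom.le {G H : Graph'} (η η' : MultiHom G H) : Prop :=
  ∀ x, η.toFun x ⊆ η'.toFun x

def SameComponent {G H : Graph'} (η η' : MultiHom G H) : Prop :=
  Relation.ReflTransGen (fun a b => MultiHom.le a b ∨ MultiHom.le b a) η η'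

def ofHom {G H : Graph'} (f : G.V → H.V) (hf : IsGraphHom G H f) : MultiHom G H where
  toFun x := {f x}
  nonempty x := ⟨f x, rfl⟩
  edge := by
    intro x y hxy a ha b hb
    rw [Set.mem_singleton_iff] at ha hb
    subst ha; subst hb
    exact hf hxy

def prodI (G : Graph') (n : ℕ) : Graph' where
  V := G.V × Fin (n + 1)
  E := fun p q => G.E p.1 q.1 ∧ p.2.val ≤ q.2.val + 1 ∧ q.2.val ≤ p.2.val + 1
  symm := by
    rintro p q ⟨h1, h2, h3⟩
    exact ⟨G.symm h1, h3, h2⟩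

def MoveA {G : Graph'} {a b : G.V} (γ δ : Walk G a b) : Prop :=
  δ.len = γ.len + 2 ∧ ∃ k ≤ γ.len,
    (∀ i ≤ k, δ.toFun i = γ.toFun i) ∧
    (∀ i, k ≤ i → i ≤ γ.len → δ.toFun (i + 2) = γ.toFun i)

def MoveB {G : Graph'} {a b : G.V} (γ δ : Walk G a b) : Prop :=
  γ.len = δ.len ∧ ∃ j, ∀ i ≤ γ.len, i ≠ j → γ.toFun i = δ.toFun i

def Eqv1 {G : Graph'} {a b : G.V} : Walk G a b → Walk G a b → Prop :=
  Relation.EqvGen MoveA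

def Eqv2 {G : Graph'} {a b : G.V} : Walk G a b → Walk G a b → Prop :=
  Relation.EqvGen (fun γ δ => MoveA γ δ ∨ MoveB γ δ)

noncomputable def Graph'.dist (G : Graph') (a b : G.V) : ℕ :=
  sInf {n | ∃ γ : Walk G a b, γ.len = n}

def Graph'.Connected (G : Graph') : Prop := ∀ a b : G.V, Nonempty (Walk G a b)

def Graph'.Bipartite (G : Graph') : Prop :=
  ∃ c : G.V → ZMod 2, ∀ {x y}, G.E x y → c x ≠ c y

def constWalk {G : Graph'} (a : G.V) : Walk G a a :=
  ⟨0, fun _ => a, rfl, rfl, fun i hi => absurd hi (by omega)⟩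

def Walk.concat {G : Graph'} {a b c : G.V} (γ : Walk G a b) (δ : Walk G b c) :
    Walk G a c where
  len := γ.len + δ.len
  toFun i := if i ≤ γ.len then γ.toFun i else δ.toFun (i - γ.len)
  start_eq := by simp [γ.start_eq]
  end_eq := by
    by_cases h : δ.len = 0
    · have hbc : b = c := by
        have h1 := δ.end_eq
        rw [h, δ.start_eq] at h1
        exact h1
      simp [h, γ.end_eq, hbc]
    · have h1 : ¬ (γ.len + δ.len ≤ γ.len) := by omega
      try dsimp only
      rw [if_neg h1]
      have h2 : γ.len + δ.len - γ.len = δ.len := by omega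
      rw [h2, δ.end_eq]
  adj := by
    intro i hi
    try dsimp only
    rcases lt_trichotomy i γ.len with h | h | h
    · rw [if_pos (by omega : i ≤ γ.len), if_pos (by omega : i + 1 ≤ γ.len)]
      exact γ.adj i h
    · have hδ : 0 < δ.len := by omega
      rw [if_pos (by omega : i ≤ γ.len), if_neg (by omega : ¬ i + 1 ≤ γ.len)]
      have h2 : i + 1 - γ.len = 1 := by omega
      rw [h2, h, γ.end_eq]
      have h3 := δ.adj 0 hδ
      rw [δ.start_eq] at h3
      exact h3
    · rw [if_neg (by omega : ¬ i ≤ γ.len), if_neg (by omega : ¬ i + 1 ≤ γ.len)]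
      have h2 : i + 1 - γ.len = (i - γ.len) + 1 := by omega
      rw [h2]
      exact δ.adj (i - γ.len) (by omega)

def Walk.reverse {G : Graph'} {a b : G.V} (γ : Walk G a b) : Walk G b a where
  len := γ.len
  toFun i := γ.toFun (γ.len - i)
  start_eq := by simp [γ.end_eq]
  end_eq := by simp [γ.start_eq]
  adj := by
    intro i hi
    have h1 : γ.len - i = (γ.len - (i + 1)) + 1 := by omega
    have h2 := γ.adj (γ.len - (i + 1)) (by omega)
    rw [← h1] at h2
    exact G.symm h2

def Walk.map {G H : Graph'} (f : G.V → H.V) (hf : IsGraphHom G H f) {a b : G.V}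
    (γ : Walk G a b) : Walk H (f a) (f b) where
  len := γ.len
  toFun i := f (γ.toFun i)
  start_eq := by (try dsimp only); rw [γ.start_eq]
  end_eq := by (try dsimp only); rw [γ.end_eq]
  adj := fun i hi => hf (γ.adj i hi)

def Walk.pow {G : Graph'} {a : G.V} (γ : Walk G a a) : ℕ → Walk G a a
  | 0 => constWalk a
  | n + 1 => (Walk.pow γ n).concat γ

def Walk.zpow {G : Graph'} {a : G.V} (γ : Walk G a a) : ℤ → Walk G a a
  | Int.ofNat n => γ.pow n
  | Int.negSucc n => γ.reverse.pow (n + 1)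
def finClip (n t : ℕ) : Fin (n + 1) := ⟨min t n, by omega⟩

def realizedWalk {G H : Graph'} {n : ℕ} (h : (prodI G n).V → H.V)
    (hh : IsGraphHom (prodI G n) H h) {v v' : G.V} (hvv' : G.E v v')
    {w : H.V} (h0 : h (v, finClip n 0) = w) (hN : h (v, finClip n n) = w) :
    Walk H w w where
  len := 2 * n
  toFun i := if i % 2 = 0 then h (v, finClip n (i / 2)) else h (v', finClip n (i / 2))
  start_eq := by
    try dsimp only
    rw [if_pos (by norm_num : (0:ℕ) % 2 = 0), Nat.zero_div]
    exact h0
  end_eq := by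
    try dsimp only
    rw [if_pos (by omega : (2 * n) % 2 = 0)]
    have h2 : 2 * n / 2 = n := by omega
    rw [h2]
    exact hN
  adj := by
    intro i hi
    try dsimp only
    rcases Nat.even_or_odd i with he | ho
    · obtain ⟨t, ht⟩ := he
      rw [if_pos (by omega : i % 2 = 0), if_neg (by omega : ¬ (i + 1) % 2 = 0)]
      have h4 : (i + 1) / 2 = i / 2 := by omega
      rw [h4]
      refine hh ⟨hvv', ?_, ?_⟩ <;> (try dsimp only; omega)
    · obtain ⟨t, ht⟩ := ho
      rw [if_neg (by omega : ¬ i % 2 = 0), if_pos (by omega : (i + 1) % 2 = 0)]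
      refine hh ⟨G.symm hvv', ?_, ?_⟩ <;> (dsimp only [finClip]; omega)

def Realizable {G H : Graph'} (f : G.V → H.V) (v : G.V) (ω : Walk H (f v) (f v)) : Prop :=
  ∃ (n : ℕ) (h : (prodI G n).V → H.V) (hh : IsGraphHom (prodI G n) H h)
    (hs : ∀ x, h (x, finClip n 0) = f x) (he : ∀ x, h (x, finClip n n) = f x)
    (v' : G.V) (_ : G.E v v'),
    Eqv2 ω (realizedWalk h hh ‹G.E v v'› (hs v) (he v))
def SquareFree (G : Graph') : Prop :=
  (∀ x, ¬ G.E x x) ∧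
  ¬ ∃ a b c d : G.V, a ≠ b ∧ a ≠ c ∧ a ≠ d ∧ b ≠ c ∧ b ≠ d ∧ c ≠ d ∧
    G.E a b ∧ G.E b c ∧ G.E c d ∧ G.E d a

def nbhd (G : Graph') (v : G.V) : Set G.V := {y | G.E v y}

def nbhd2 (G : Graph') (v : G.V) : Set G.V := {z | ∃ y, G.E v y ∧ G.E y z}

def IsGraphCovering (G H : Graph') (p : G.V → H.V) : Prop :=
  IsGraphHom G H p ∧ ∀ v : G.V, Set.BijOn p (nbhd G v) (nbhd H (p v))

def Is2CoveringMap (G H : Graph') (p : G.V → H.V) : Prop :=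
  IsGraphHom G H p ∧ ∀ v : G.V,
    Set.BijOn p (nbhd G v) (nbhd H (p v)) ∧ Set.BijOn p (nbhd2 G v) (nbhd2 H (p v))

def pushforward {G H1 H2 : Graph'} (p : H1.V → H2.V) (hp : IsGraphHom H1 H2 p)
    (η : MultiHom G H1) : MultiHom G H2 where
  toFun x := p '' η.toFun x
  nonempty x := (η.nonempty x).image p
  edge := by
    rintro x y hxy a ⟨a', ha', rfl⟩ b ⟨b', hb', rfl⟩
    exact hp (η.edge hxy a' ha' b' hb')

def IsCycleWalk {G : Graph'} {a : G.V} (γ : Walk G a a) : Prop :=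
  3 ≤ γ.len ∧ ∀ i j, i < γ.len → j < γ.len → γ.toFun i = γ.toFun j → i = j

def IsTree (T : Graph') : Prop :=
  (∀ x, ¬ T.E x x) ∧ (∀ a b : T.V, Nonempty (Walk T a b)) ∧
    ∀ (a : T.V) (γ : Walk T a a), ¬ IsCycleWalk γ

def IsPath {G : Graph'} {a b : G.V} (γ : Walk G a b) : Prop :=
  ∀ i j, i ≤ γ.len → j ≤ γ.len → γ.toFun i = γ.toFun j → i = j

def OnWalk {G : Graph'} {a b : G.V} (γ : Walk G a b) (y : G.V) : Prop :=
  ∃ i ≤ γ.len, γ.toFun i = y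

def CrossHomotopic (G H : Graph') (f g : G.V → H.V) : Prop :=
  ∃ (n : ℕ) (h : (prodI G n).V → H.V), IsGraphHom (prodI G n) H h ∧
    (∀ x, h (x, finClip n 0) = f x) ∧ (∀ x, h (x, finClip n n) = g x)

def quotGraph (G : Graph') (Γ : Type) [Group Γ] [MulAction Γ G.V] : Graph' where
  V := Quotient (MulAction.orbitRel Γ G.V)
  E := fun α β => ∃ x y : G.V, Quotient.mk (MulAction.orbitRel Γ G.V) x = α ∧
        Quotient.mk (MulAction.orbitRel Γ G.V) y = β ∧ G.E x y
  symm := by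
    rintro α β ⟨x, y, hx, hy, hxy⟩
    exact ⟨y, x, hy, hx, G.symm hxy⟩

lemma zmod2_ne {a b : ZMod 2} (h : a ≠ b) : b = a + 1 := by
  revert h; revert a b; decide

lemma walk_color {T : Graph'} (c : T.V → ZMod 2)
    (hc : ∀ {x y}, T.E x y → c x ≠ c y) {a b : T.V} (γ : Walk T a b) :
    c b = c a + γ.len := by
  have key : ∀ i ≤ γ.len, c (γ.toFun i) = c a + i := by
    intro i
    induction i with
    | zero => intro _; simp [γ.start_eq]
    | succ n ih =>
        intro hn
        have h1 := ih (by omega)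
        have h2 := zmod2_ne (hc (γ.adj n (by omega)))
        rw [h2, h1]
        push_cast
        ring
  have := key γ.len le_rfl
  rwa [γ.end_eq] at this

lemma every_vertex_has_nbr {G : Graph'} (hGconn : Graph'.Connected G)
    (hGe : ∃ x y : G.V, G.E x y) (x : G.V) : ∃ x', G.E x x' := by
  obtain ⟨u, v, huv⟩ := hGe
  obtain ⟨γ⟩ := hGconn u x
  rcases Nat.eq_zero_or_pos γ.len with h0 | hpos
  · have : u = x := by
      have h1 := γ.start_eq
      have h2 := γ.end_eq
      rw [h0] at h2; rw [h1] at h2; exact h2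
    exact ⟨v, this ▸ huv⟩
  · have hadj := γ.adj (γ.len - 1) (by omega)
    have h3 : γ.len - 1 + 1 = γ.len := by omega
    rw [h3, γ.end_eq] at hadj
    exact ⟨_, G.symm hadj⟩

lemma multihom_color_const {G T : Graph'} (hGconn : Graph'.Connected G)
    (hGe : ∃ x y : G.V, G.E x y) (c : T.V → ZMod 2)
    (hc : ∀ {x y}, T.E x y → c x ≠ c y) (μ : MultiHom G T) (x : G.V)
    {a b : T.V} (ha : a ∈ μ.toFun x) (hb : b ∈ μ.toFun x) : c a = c b := by
  obtain ⟨x', hxx'⟩ := every_vertex_has_nbr hGconn hGe x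
  obtain ⟨w, hw⟩ := μ.nonempty x'
  have h1 := zmod2_ne (hc (μ.edge hxx' a ha w hw))
  have h2 := zmod2_ne (hc (μ.edge hxx' b hb w hw))
  exact add_right_cancel (h1.symm.trans h2)

theorem statement_4 (G T : Graph') (hGconn : Graph'.Connected G)
    (hGe : ∃ x y : G.V, G.E x y)
    (hTconn : Graph'.Connected T) (hTbip : Graph'.Bipartite T)
    (f : G.V → T.V) (hf : IsGraphHom G T f) (η : MultiHom G T)
    (hη : SameComponent (ofHom f hf) η) :
    ∀ x : G.V, ∀ y ∈ η.toFun x, Even (T.dist (f x) y) := by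
  obtain ⟨c, hc⟩ := hTbip
  -- invariant along the component
  have inv : ∀ x : G.V, ∀ y ∈ η.toFun x, c y = c (f x) := by
    have : ∀ μ : MultiHom G T, SameComponent (ofHom f hf) μ →
        ∀ x : G.V, ∀ y ∈ μ.toFun x, c y = c (f x) := by
      intro μ hμ
      induction hμ with
      | refl => intro x y hy; simp only [ofHom, Set.mem_singleton_iff] at hy; rw [hy]
      | @tail μ1 μ2 hab hrel ih =>
          rcases hrel with hle | hle
          · intro x y hy
            obtain ⟨y0, hy0⟩ := μ1.nonempty x
            have := multihom_color_const hGconn hGe c hc μ2 x hy (hle x hy0)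
            rw [this, ih x y0 hy0]
          · intro x y hy
            exact ih x y (hle x hy)
    exact this η hη
  intro x y hy
  have hcy := inv x y hy
  -- the distance is realized by some walk
  have hne : {n | ∃ γ : Walk T (f x) y, γ.len = n}.Nonempty := by
    obtain ⟨γ⟩ := hTconn (f x) y
    exact ⟨γ.len, γ, rfl⟩
  obtain ⟨γ, hγ⟩ := Nat.sInf_mem hne
  have hpar := walk_color c hc γ
  rw [hcy] at hpar
  have h0 : ((γ.len : ZMod 2)) = 0 := by
    have := hpar.symm
    rwa [add_eq_left] at this
  have hdvd : 2 ∣ γ.len := (ZMod.natCast_eq_zero_iff _ _).mp h0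
  unfold Graph'.dist
  rw [← hγ]
  exact (even_iff_two_dvd).mpr hdvd
end

section
/- Let G be a graph, T a tree, f : G → T a graph homomorphism, n ≥ 1 an integer, and η a multi-homomorphism from G to T such that d_T(f(z), y) ≤ 2n for every z ∈ V(G) and every y ∈ η(z). Let (x,x′) ∈ E(G) be an edge, suppose u_η(x) = 2n, let y ∈ η(x) satisfy d_T(f(x), y) = 2n, and let P be the unique path in T from f(x) to y. Suppose moreover that there do NOT exist y₀ ∈ η(x) and y′ ∈ η(x′) with d_T(f(x), y₀) = d_T(f(x′), y′) = 2n such that the unique path in T from f(x′) to y′ contains y₀ (i.e., (x,x′) is not a directed edge of η). Then η(x′) consists of a single vertex y′, and y′ lies on P and is the vertex of P immediately preceding its endpoint y. -/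
namespace TreeAux

variable {G : Graph'}

def edgeWalk {a b : G.V} (h : G.E a b) : Walk G a b where
  len := 1
  toFun i := if i = 0 then a else b
  start_eq := by simp
  end_eq := by simp
  adj := by
    intro i hi
    have : i = 0 := by omega
    subst this
    simpa using h

@[simp] lemma edgeWalk_len {a b : G.V} (h : G.E a b) : (edgeWalk h).len = 1 := rfl

def copyStart {a a' b : G.V} (γ : Walk G a b) (h : a = a') : Walk G a' b :=
  ⟨γ.len, γ.toFun, h ▸ γ.start_eq, γ.end_eq, γ.adj⟩

def copyEnd {a b b' : G.V} (γ : Walk G a b) (h : b = b') : Walk G a b' :=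
  ⟨γ.len, γ.toFun, γ.start_eq, h ▸ γ.end_eq, γ.adj⟩

lemma concat_toFun_left {a b c : G.V} (γ : Walk G a b) (δ : Walk G b c) {i : ℕ}
    (hi : i ≤ γ.len) : (γ.concat δ).toFun i = γ.toFun i := by
  show (if i ≤ γ.len then γ.toFun i else δ.toFun (i - γ.len)) = γ.toFun i
  rw [if_pos hi]

lemma concat_toFun_right {a b c : G.V} (γ : Walk G a b) (δ : Walk G b c) (t : ℕ) :
    (γ.concat δ).toFun (γ.len + t) = δ.toFun t := by
  show (if γ.len + t ≤ γ.len then γ.toFun (γ.len + t) else δ.toFun (γ.len + t - γ.len))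
      = δ.toFun t
  rcases Nat.eq_zero_or_pos t with rfl | ht
  · rw [if_pos (by omega)]
    simpa [γ.end_eq] using δ.start_eq.symm
  · rw [if_neg (by omega)]
    congr 1
    omega

@[simp] lemma concat_len {a b c : G.V} (γ : Walk G a b) (δ : Walk G b c) :
    (γ.concat δ).len = γ.len + δ.len := rfl

@[simp] lemma reverse_len {a b : G.V} (γ : Walk G a b) : γ.reverse.len = γ.len := rfl

/-- Cut out a loop from a walk. -/
def cutWalk {a b : G.V} (γ : Walk G a b) (i j : ℕ) (hij : i ≤ j) (hj : j ≤ γ.len)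
    (heq : γ.toFun i = γ.toFun j) : Walk G a b where
  len := γ.len - (j - i)
  toFun k := if k ≤ i then γ.toFun k else γ.toFun (k + (j - i))
  start_eq := by
    rw [if_pos (Nat.zero_le i)]
    exact γ.start_eq
  end_eq := by
    by_cases h : γ.len - (j - i) ≤ i
    · have h1 : γ.len - (j - i) = i := by omega
      have h2 : j = γ.len := by omega
      rw [if_pos h, h1, heq, h2, γ.end_eq]
    · rw [if_neg h]
      have : γ.len - (j - i) + (j - i) = γ.len := by omega
      rw [this, γ.end_eq]
  adj := by
    intro k hk
    rcases Nat.lt_or_ge k i with h | h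
    · rw [if_pos (by omega : k ≤ i), if_pos (by omega : k + 1 ≤ i)]
      exact γ.adj k (by omega)
    · rcases Nat.eq_or_lt_of_le h with h' | h'
      · rw [if_pos (by omega : k ≤ i), if_neg (by omega : ¬ k + 1 ≤ i), ← h', heq]
        have : i + 1 + (j - i) = j + 1 := by omega
        rw [this]
        exact γ.adj j (by omega)
      · rw [if_neg (by omega : ¬ k ≤ i), if_neg (by omega : ¬ k + 1 ≤ i)]
        have : k + 1 + (j - i) = (k + (j - i)) + 1 := by omega
        rw [this]
        exact γ.adj (k + (j - i)) (by omega)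

@[simp] lemma cutWalk_len {a b : G.V} (γ : Walk G a b) (i j : ℕ) (hij : i ≤ j)
    (hj : j ≤ γ.len) (heq : γ.toFun i = γ.toFun j) :
    (cutWalk γ i j hij hj heq).len = γ.len - (j - i) := rfl

def subWalk {a b : G.V} (γ : Walk G a b) (i j : ℕ) (hij : i ≤ j) (hj : j ≤ γ.len) :
    Walk G (γ.toFun i) (γ.toFun j) where
  len := j - i
  toFun k := γ.toFun (i + k)
  start_eq := by rw [Nat.add_zero]
  end_eq := congrArg γ.toFun (by omega)
  adj := by
    intro k hk
    have : i + (k + 1) = (i + k) + 1 := by omega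
    rw [this]
    exact γ.adj (i + k) (by omega)

lemma dist_le {a b : G.V} (γ : Walk G a b) : G.dist a b ≤ γ.len :=
  Nat.sInf_le ⟨γ, rfl⟩

lemma exists_dist_walk {a b : G.V} (γ0 : Walk G a b) :
    ∃ γ : Walk G a b, γ.len = G.dist a b := by
  have hne : {m | ∃ γ : Walk G a b, γ.len = m}.Nonempty := ⟨γ0.len, γ0, rfl⟩
  exact Nat.sInf_mem hne

lemma dist_symm (a b : G.V) : G.dist a b = G.dist b a := by
  unfold Graph'.dist
  congr 1
  ext m
  constructor
  · rintro ⟨γ, rfl⟩; exact ⟨γ.reverse, rfl⟩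
  · rintro ⟨γ, rfl⟩; exact ⟨γ.reverse, rfl⟩

lemma geodesic_isPath {a b : G.V} (γ : Walk G a b) (h : γ.len = G.dist a b) :
    IsPath γ := by
  have key : ∀ i j, i < j → j ≤ γ.len → γ.toFun i ≠ γ.toFun j := by
    intro i j hij hj heq
    have h1 := dist_le (cutWalk γ i j (by omega) hj heq)
    rw [cutWalk_len] at h1
    omega
  intro i j hi hj heq
  rcases lt_trichotomy i j with h' | h' | h'
  · exact absurd heq (key i j h' hj)
  · exact h'
  · exact absurd heq.symm (key j i h' hi)

lemma exists_geodesic (hT : IsTree T) (a b : T.V) :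
    ∃ γ : Walk T a b, γ.len = T.dist a b ∧ IsPath γ := by
  obtain ⟨γ0⟩ := hT.2.1 a b
  obtain ⟨γ, hγ⟩ := exists_dist_walk γ0
  exact ⟨γ, hγ, geodesic_isPath γ hγ⟩

variable {T : Graph'}

/-- In a tree, every closed walk has even length. -/
lemma closed_even_aux (hT : IsTree T) :
    ∀ N : ℕ, ∀ {a : T.V} (γ : Walk T a a), γ.len ≤ N → γ.len % 2 = 0 := by
  intro N
  induction N with
  | zero =>
    intro a γ h
    omega
  | succ N ih =>
    intro a γ h
    by_cases hinj : ∀ i j, i < γ.len → j < γ.len → γ.toFun i = γ.toFun j → i = j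
    · -- cycle-ish case
      rcases Nat.lt_or_ge γ.len 3 with h3 | h3
      · interval_cases hl : γ.len
        · rfl
        · exfalso
          have h1 := γ.adj 0 (by omega)
          rw [γ.start_eq] at h1
          have h2 : γ.toFun 1 = a := by rw [← hl] at *; exact γ.end_eq
          rw [h2] at h1
          exact hT.1 a h1
        · rfl
      · exact absurd ⟨h3, hinj⟩ (hT.2.2 a γ)
    · push_neg at hinj
      obtain ⟨i, j, hi, hj, heq, hne⟩ := hinj
      -- wlog i < j
      have key : ∀ i j, i < j → j < γ.len → γ.toFun i = γ.toFun j → γ.len % 2 = 0 := by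
        intro i j hij hj heq
        have hmid : (j - i) % 2 = 0 := by
          have := ih (copyEnd (subWalk γ i j (by omega) (by omega)) heq.symm)
            (by show j - i ≤ N; omega)
          exact this
        have hout : (cutWalk γ i j (by omega) (by omega) heq).len % 2 = 0 :=
          ih _ (by rw [cutWalk_len]; omega)
        rw [cutWalk_len] at hout
        omega
      rcases lt_trichotomy i j with h' | h' | h'
      · exact key i j h' hj heq
      · exact absurd h' hne
      · exact key j i h' hi heq.symm

lemma closed_even (hT : IsTree T) {a : T.V} (γ : Walk T a a) : γ.len % 2 = 0 :=
  closed_even_aux hT γ.len γ (le_refl _)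

lemma dist_parity (hT : IsTree T) {u v : T.V} (huv : T.E u v) (r : T.V) :
    (T.dist r u + T.dist r v) % 2 = 1 := by
  obtain ⟨γ, hγ, -⟩ := exists_geodesic hT r u
  obtain ⟨δ, hδ, -⟩ := exists_geodesic hT r v
  have hc := closed_even hT ((γ.concat (edgeWalk huv)).concat δ.reverse)
  simp only [concat_len, reverse_len, edgeWalk_len] at hc
  omega

def tailW {a b : T.V} (γ : Walk T a b) (h1 : 1 ≤ γ.len) : Walk T (γ.toFun 1) b where
  len := γ.len - 1
  toFun k := γ.toFun (k + 1)
  start_eq := rfl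
  end_eq := by
    have : γ.len - 1 + 1 = γ.len := by omega
    rw [this, γ.end_eq]
  adj := by
    intro k hk
    exact γ.adj (k + 1) (by omega)

lemma tailW_isPath {a b : T.V} (γ : Walk T a b) (h1 : 1 ≤ γ.len) (hγ : IsPath γ) :
    IsPath (tailW γ h1) := by
  intro i j hi hj heq
  simp only [tailW] at hi hj heq
  have := hγ (i + 1) (j + 1) (by omega) (by omega) heq
  omega

/-- Uniqueness of paths in a tree. -/
lemma path_unique_aux (hT : IsTree T) :
    ∀ N : ℕ, ∀ {a b : T.V} (γ δ : Walk T a b), γ.len + δ.len ≤ N →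
      IsPath γ → IsPath δ → γ.len = δ.len ∧ ∀ i ≤ γ.len, γ.toFun i = δ.toFun i := by
  intro N
  induction N with
  | zero =>
    intro a b γ δ hN hγ hδ
    constructor
    · omega
    · intro i hi
      have : i = 0 := by omega
      subst this
      rw [γ.start_eq, δ.start_eq]
  | succ N ih =>
    intro a b γ δ hN hγ hδ
    by_cases hγ0 : γ.len = 0
    · have hab : a = b := by
        have h1 := γ.end_eq
        rw [hγ0, γ.start_eq] at h1
        exact h1
      have hδ0 : δ.len = 0 := by
        have h1 : δ.toFun 0 = δ.toFun δ.len := by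
          rw [δ.start_eq, δ.end_eq, hab]
        exact (hδ 0 δ.len (by omega) (le_refl _) h1).symm ▸ rfl
      constructor
      · omega
      · intro i hi
        have : i = 0 := by omega
        subst this
        rw [γ.start_eq, δ.start_eq]
    · by_cases hδ0 : δ.len = 0
      · exfalso
        have hab : a = b := by
          have h1 := δ.end_eq
          rw [hδ0, δ.start_eq] at h1
          exact h1
        have h1 : γ.toFun 0 = γ.toFun γ.len := by
          rw [γ.start_eq, γ.end_eq, hab]
        have := hγ 0 γ.len (by omega) (le_refl _) h1
        omega
      · -- both lengths ≥ 1
        have hγ1 : 1 ≤ γ.len := by omega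
        have hδ1 : 1 ≤ δ.len := by omega
        by_cases h1 : γ.toFun 1 = δ.toFun 1
        · -- recurse on tails
          have tγ := tailW γ hγ1
          have tδ := copyStart (tailW δ hδ1) h1.symm
          have htγ : IsPath (tailW γ hγ1) := tailW_isPath γ hγ1 hγ
          have htδ : IsPath (copyStart (tailW δ hδ1) h1.symm) := by
            intro i j hi hj heq
            simp only [copyStart, tailW] at hi hj heq
            have := hδ (i + 1) (j + 1) (by omega) (by omega) heq
            omega
          have hsum : (tailW γ hγ1).len + (copyStart (tailW δ hδ1) h1.symm).len ≤ N := by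
            simp only [copyStart, tailW]
            omega
          obtain ⟨hlen, hval⟩ := ih (tailW γ hγ1) (copyStart (tailW δ hδ1) h1.symm)
            hsum htγ htδ
          simp only [copyStart, tailW] at hlen hval
          constructor
          · omega
          · intro i hi
            rcases Nat.eq_zero_or_pos i with rfl | hipos
            · rw [γ.start_eq, δ.start_eq]
            · have := hval (i - 1) (by omega)
              have hii : i - 1 + 1 = i := by omega
              rw [hii] at this
              exact this
        · -- paths diverge at step 1: build a cycle, contradiction
          exfalso
          set S : Set ℕ := {j | 1 ≤ j ∧ j ≤ γ.len ∧ ∃ k ≤ δ.len, δ.toFun k = γ.toFun j}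
            with hS
          have hSne : S.Nonempty := by
            refine ⟨γ.len, hγ1, le_refl _, δ.len, le_refl _, ?_⟩
            rw [γ.end_eq, δ.end_eq]
          set j := sInf S with hj
          obtain ⟨hj1, hjlen, k, hk, hδk⟩ : j ∈ S := Nat.sInf_mem hSne
          have hjmin : ∀ m, m < j → m ∉ S := fun m hm hmem =>
            absurd (Nat.sInf_le hmem) (by omega)
          have hk1 : 1 ≤ k := by
            by_contra hk0
            have hk0' : k = 0 := by omega
            have hδk' : δ.toFun 0 = γ.toFun j := hk0' ▸ hδk
            have heq0 : γ.toFun 0 = γ.toFun j :=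
              γ.start_eq.trans (δ.start_eq.symm.trans hδk')
            have := hγ 0 j (by omega) hjlen heq0
            omega
          -- the cycle walk
          set c : Walk T a a :=
            { len := j + k
              toFun := fun m => if m ≤ j then γ.toFun m else δ.toFun (j + k - m)
              start_eq := by
                rw [if_pos (Nat.zero_le j)]
                exact γ.start_eq
              end_eq := by
                rw [if_neg (by omega : ¬ j + k ≤ j)]
                have : j + k - (j + k) = 0 := by omega
                rw [this, δ.start_eq]
              adj := by
                intro m hm
                rcases Nat.lt_or_ge m j with h' | h'
                · rw [if_pos (by omega : m ≤ j), if_pos (by omega : m + 1 ≤ j)]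
                  exact γ.adj m (by omega)
                · rcases Nat.eq_or_lt_of_le h' with h'' | h''
                  · rw [if_pos (by omega : m ≤ j), if_neg (by omega : ¬ m + 1 ≤ j)]
                    have he : j + k - (m + 1) = k - 1 := by omega
                    rw [he, ← h'', ← hδk]
                    have := δ.adj (k - 1) (by omega)
                    have hkk : k - 1 + 1 = k := by omega
                    rw [hkk] at this
                    exact T.symm this
                  · rw [if_neg (by omega : ¬ m ≤ j), if_neg (by omega : ¬ m + 1 ≤ j)]
                    have := δ.adj (j + k - m - 1) (by omega)
                    have hkk : j + k - m - 1 + 1 = j + k - m := by omega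
                    rw [hkk] at this
                    have he : j + k - (m + 1) = j + k - m - 1 := by omega
                    rw [he]
                    exact T.symm this } with hc
          have h3 : 3 ≤ c.len := by
            show 3 ≤ j + k
            by_contra hlt
            have hj1' : j = 1 := by omega
            have hk1' : k = 1 := by omega
            rw [hj1', hk1'] at hδk
            exact h1 hδk.symm
          have hinj : ∀ i₁ i₂, i₁ < c.len → i₂ < c.len → c.toFun i₁ = c.toFun i₂ →
              i₁ = i₂ := by
            have hcross : ∀ i₁ i₂, i₁ ≤ j → j < i₂ → i₂ < j + k →
                γ.toFun i₁ ≠ δ.toFun (j + k - i₂) := by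
              intro i₁ i₂ hi₁ hi₂ hi₂' heq
              set l := j + k - i₂ with hl
              have hl1 : 1 ≤ l := by omega
              have hlk : l ≤ k - 1 := by omega
              rcases Nat.eq_zero_or_pos i₁ with rfl | hi₁pos
              · have heq' : δ.toFun 0 = δ.toFun l :=
                  (δ.start_eq.trans γ.start_eq.symm).trans heq
                have := hδ 0 l (by omega) (by omega) heq'
                omega
              · rcases Nat.eq_or_lt_of_le hi₁ with h'' | h''
                · rw [h'', ← hδk] at heq
                  have := hδ k l (by omega) (by omega) heq
                  omega
                · exact hjmin i₁ h'' ⟨hi₁pos, by omega, l, by omega, heq.symm⟩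
            intro i₁ i₂ hi₁ hi₂ heq
            show i₁ = i₂
            simp only [hc] at heq hi₁ hi₂
            rcases le_or_gt i₁ j with h₁ | h₁ <;> rcases le_or_gt i₂ j with h₂ | h₂
            · rw [if_pos h₁, if_pos h₂] at heq
              exact hγ i₁ i₂ (by omega) (by omega) heq
            · rw [if_pos h₁, if_neg (by omega)] at heq
              exact absurd heq (hcross i₁ i₂ h₁ h₂ hi₂)
            · rw [if_neg (by omega), if_pos h₂] at heq
              exact absurd heq.symm (hcross i₂ i₁ h₂ h₁ hi₁)
            · rw [if_neg (by omega), if_neg (by omega)] at heq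
              have := hδ (j + k - i₁) (j + k - i₂) (by omega) (by omega) heq
              omega
          exact hT.2.2 a c ⟨h3, hinj⟩

lemma path_unique (hT : IsTree T) {a b : T.V} (γ δ : Walk T a b)
    (hγ : IsPath γ) (hδ : IsPath δ) :
    γ.len = δ.len ∧ ∀ i ≤ γ.len, γ.toFun i = δ.toFun i :=
  path_unique_aux hT (γ.len + δ.len) γ δ (le_refl _) hγ hδ

lemma path_len_eq_dist (hT : IsTree T) {a b : T.V} (γ : Walk T a b) (hγ : IsPath γ) :
    γ.len = T.dist a b := by
  obtain ⟨δ, hδlen, hδ⟩ := exists_geodesic hT a b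
  rw [(path_unique hT γ δ hγ hδ).1, hδlen]

end TreeAux

open TreeAux

theorem statement_7 (G T : Graph') (hT : IsTree T)
    (f : G.V → T.V) (hf : IsGraphHom G T f) (n : ℕ) (hn : 1 ≤ n)
    (η : MultiHom G T)
    (hbound : ∀ z : G.V, ∀ y ∈ η.toFun z, T.dist (f z) y ≤ 2 * n)
    (x x' : G.V) (hxx' : G.E x x')
    (y : T.V) (hy : y ∈ η.toFun x) (hyd : T.dist (f x) y = 2 * n)
    (P : Walk T (f x) y) (hP : IsPath P)
    (hnd : ¬ ∃ y₀ ∈ η.toFun x, ∃ y' ∈ η.toFun x',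
      T.dist (f x) y₀ = 2 * n ∧ T.dist (f x') y' = 2 * n ∧
      ∀ Q : Walk T (f x') y', IsPath Q → OnWalk Q y₀) :
    ∃ y' : T.V, η.toFun x' = {y'} ∧ OnWalk P y' ∧ y' = P.toFun (P.len - 1) := by
  have hAA' : T.E (f x) (f x') := hf hxx'
  have hPlen : P.len = 2 * n := by
    rw [path_len_eq_dist hT P hP, hyd]
  set w := P.toFun (P.len - 1) with hw
  have main : ∀ y' ∈ η.toFun x', y' = w := by
    intro y' hy'
    have hyy' : T.E y y' := η.edge hxx' y hy y' hy'
    set d1 := T.dist (f x') y with hd1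
    set d2 := T.dist (f x') y' with hd2
    obtain ⟨Q1, hQ1len, hQ1path⟩ := exists_geodesic hT (f x') y
    obtain ⟨Q2, hQ2len, hQ2path⟩ := exists_geodesic hT (f x') y'
    have hb1 : d1 ≤ 2 * n + 1 := by
      have h := dist_le ((edgeWalk (T.symm hAA')).concat P)
      simp only [concat_len, edgeWalk_len, hPlen] at h
      omega
    have hb2 : 2 * n ≤ d1 + 1 := by
      have h := dist_le ((edgeWalk hAA').concat Q1)
      simp only [concat_len, edgeWalk_len, hQ1len] at h
      rw [hyd] at h
      omega
    have hpar1 : (2 * n + d1) % 2 = 1 := by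
      have h := dist_parity hT hAA' y
      rw [dist_symm y (f x), dist_symm y (f x'), hyd, ← hd1] at h
      exact h
    have hpar2 : (d1 + d2) % 2 = 1 := dist_parity hT hyy' (f x')
    have htri1 : d2 ≤ d1 + 1 := by
      have h := dist_le (Q1.concat (edgeWalk hyy'))
      simp only [concat_len, edgeWalk_len, hQ1len] at h
      omega
    have htri2 : d1 ≤ d2 + 1 := by
      have h := dist_le (Q2.concat (edgeWalk (T.symm hyy')))
      simp only [concat_len, edgeWalk_len, hQ2len] at h
      omega
    have hb3 : d2 ≤ 2 * n := hbound x' y' hy'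
    have hcases : (d1 = 2 * n - 1 ∧ d2 = 2 * n - 2) ∨ (d1 = 2 * n - 1 ∧ d2 = 2 * n) ∨
        (d1 = 2 * n + 1 ∧ d2 = 2 * n) := by omega
    rcases hcases with ⟨e1, e2⟩ | ⟨e1, e2⟩ | ⟨e1, e2⟩
    · -- d1 = 2n-1, d2 = 2n-2 : y' is on the geodesic from f x' to y, one step before y
      have hS : ((edgeWalk hAA').concat Q1).len = T.dist (f x) y := by
        simp only [concat_len, edgeWalk_len, hQ1len, hyd]
        omega
      have hSpath := geodesic_isPath _ hS
      obtain ⟨hlen1, hval1⟩ := path_unique hT ((edgeWalk hAA').concat Q1) P hSpath hP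
      have hR : (Q2.concat (edgeWalk (T.symm hyy'))).len = d1 := by
        simp only [concat_len, edgeWalk_len, hQ2len]
        omega
      have hRpath := geodesic_isPath _ (hR.trans hd1)
      obtain ⟨hlen2, hval2⟩ :=
        path_unique hT (Q2.concat (edgeWalk (T.symm hyy'))) Q1 hRpath hQ1path
      have e3 : ((edgeWalk hAA').concat Q1).toFun (2 * n - 1) = Q1.toFun (2 * n - 2) := by
        have h := concat_toFun_right (edgeWalk hAA') Q1 (2 * n - 2)
        rw [edgeWalk_len] at h
        have hi : 1 + (2 * n - 2) = 2 * n - 1 := by omega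
        rw [hi] at h
        exact h
      have e4 : (Q2.concat (edgeWalk (T.symm hyy'))).toFun (2 * n - 2) =
          Q2.toFun (2 * n - 2) := concat_toFun_left _ _ (by omega)
      have e5 : Q2.toFun (2 * n - 2) = y' := by
        rw [show 2 * n - 2 = Q2.len from by omega]
        exact Q2.end_eq
      have e6 : (Q2.concat (edgeWalk (T.symm hyy'))).toFun (2 * n - 2) =
          Q1.toFun (2 * n - 2) := hval2 (2 * n - 2) (by simp only [concat_len]; omega)
      have e7 : ((edgeWalk hAA').concat Q1).toFun (2 * n - 1) = P.toFun (2 * n - 1) :=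
        hval1 (2 * n - 1) (by simp only [concat_len, edgeWalk_len]; omega)
      rw [hw, hPlen, ← e7, e3, ← e6, e4, e5]
    · -- d1 = 2n-1, d2 = 2n : contradiction with hnd
      exfalso
      apply hnd
      have hd2n : T.dist (f x') y' = 2 * n := by
        rw [← hd2]
        exact e2
      refine ⟨y, hy, y', hy', hyd, hd2n, ?_⟩
      intro Q hQpath
      have hRlen : (Q1.concat (edgeWalk hyy')).len = 2 * n := by
        simp only [concat_len, edgeWalk_len, hQ1len]
        omega
      have hRpath := geodesic_isPath (Q1.concat (edgeWalk hyy')) (hRlen.trans hd2n.symm)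
      obtain ⟨hlen, hval⟩ := path_unique hT Q (Q1.concat (edgeWalk hyy')) hQpath hRpath
      refine ⟨2 * n - 1, by omega, ?_⟩
      rw [hval (2 * n - 1) (by omega)]
      rw [concat_toFun_left _ _ (by omega)]
      rw [show 2 * n - 1 = Q1.len from by omega]
      exact Q1.end_eq
    · -- d1 = 2n+1, d2 = 2n : geodesic to y' extended by y is the path through f x
      have hS : ((edgeWalk (T.symm hAA')).concat P).len = d1 := by
        simp only [concat_len, edgeWalk_len, hPlen]
        omega
      have hSpath := geodesic_isPath _ (hS.trans hd1)
      have hR : (Q2.concat (edgeWalk (T.symm hyy'))).len = d1 := by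
        simp only [concat_len, edgeWalk_len, hQ2len]
        omega
      have hRpath := geodesic_isPath _ (hR.trans hd1)
      obtain ⟨hlen, hval⟩ := path_unique hT (Q2.concat (edgeWalk (T.symm hyy')))
        ((edgeWalk (T.symm hAA')).concat P) hRpath hSpath
      have e3 : (Q2.concat (edgeWalk (T.symm hyy'))).toFun (2 * n) =
          Q2.toFun (2 * n) := concat_toFun_left _ _ (by omega)
      have e4 : Q2.toFun (2 * n) = y' := by
        rw [show 2 * n = Q2.len from by omega]
        exact Q2.end_eq
      have e5 : ((edgeWalk (T.symm hAA')).concat P).toFun (2 * n) = P.toFun (2 * n - 1) := by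
        have h := concat_toFun_right (edgeWalk (T.symm hAA')) P (2 * n - 1)
        rw [edgeWalk_len] at h
        have hi : 1 + (2 * n - 1) = 2 * n := by omega
        rw [hi] at h
        exact h
      have e6 := hval (2 * n) (by simp only [concat_len, edgeWalk_len, hQ2len]; omega)
      rw [hw, hPlen, ← e5, ← e6, e3, e4]
  refine ⟨w, ?_, ⟨P.len - 1, by omega, rfl⟩, rfl⟩
  apply Set.eq_singleton_iff_unique_mem.mpr
  obtain ⟨z, hz⟩ := η.nonempty x'
  exact ⟨(main z hz) ▸ hz, main⟩
end

section
/- Let Γ be a group acting on a graph G (each γ ∈ Γ acts on V(G) preserving the edge relation) such that the action on the vertex set V(G) is free. Then the projection G → G/Γ is a 2-covering map if and only if the action is a 2-covering action, i.e., N²(x) ∩ N²(γx) = ∅ for every x ∈ V(G) and every γ ∈ Γ with γ ≠ 1. -/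
lemma mk_eq_iff {G : Graph'} {Γ : Type} [Group Γ] [MulAction Γ G.V] {a b : G.V} :
    Quotient.mk (MulAction.orbitRel Γ G.V) a = Quotient.mk (MulAction.orbitRel Γ G.V) b ↔
    ∃ γ : Γ, γ • b = a := by
  constructor
  · intro h
    have := Quotient.exact h
    exact MulAction.mem_orbit_iff.mp this
  · rintro ⟨γ, rfl⟩
    exact Quotient.sound (MulAction.mem_orbit_iff.mpr ⟨γ, rfl⟩)

theorem statement_19 (G : Graph') (Γ : Type) [Group Γ] [MulAction Γ G.V]
    (hact : ∀ (γ : Γ) {x y : G.V}, G.E x y → G.E (γ • x) (γ • y))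
    (hfree : ∀ (γ : Γ) (x : G.V), γ • x = x → γ = 1) :
    Is2CoveringMap G (quotGraph G Γ)
      (fun x => Quotient.mk (MulAction.orbitRel Γ G.V) x) ↔
    ∀ (x : G.V) (γ : Γ), γ ≠ 1 → nbhd2 G x ∩ nbhd2 G (γ • x) = ∅ := by
  constructor
  · intro H x γ hγ
    rw [Set.eq_empty_iff_forall_notMem]
    rintro z ⟨hz1, hz2⟩
    obtain ⟨y, hy1, hy2⟩ := hz2
    have hz2' : γ⁻¹ • z ∈ nbhd2 G x := by
      refine ⟨γ⁻¹ • y, ?_, hact γ⁻¹ hy2⟩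
      have := hact γ⁻¹ hy1
      simpa using this
    have hinj := (H.2 x).2.2.1
    have heq : Quotient.mk (MulAction.orbitRel Γ G.V) z =
        Quotient.mk (MulAction.orbitRel Γ G.V) (γ⁻¹ • z) :=
      mk_eq_iff.mpr ⟨γ, smul_inv_smul γ _⟩
    have h1 : z = γ⁻¹ • z := hinj hz1 hz2' heq
    have h2 : γ⁻¹ = 1 := hfree γ⁻¹ z h1.symm
    exact hγ (by simpa using congrArg Inv.inv h2)
  · intro hcond
    refine ⟨fun {x y} hxy => ⟨x, y, rfl, rfl, hxy⟩, fun v => ⟨⟨?_, ?_, ?_⟩, ⟨?_, ?_, ?_⟩⟩⟩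
    · -- MapsTo nbhd
      intro y hy
      exact ⟨v, y, rfl, rfl, hy⟩
    · -- InjOn nbhd
      intro y hy y' hy' heq
      obtain ⟨γ, rfl⟩ := mk_eq_iff.mp heq
      by_cases hγ : γ = 1
      · rw [hγ, one_smul]
      · exfalso
        have := hcond y' γ hγ
        have hm : γ • y' ∈ nbhd2 G y' ∩ nbhd2 G (γ • y') := by
          constructor
          · exact ⟨v, G.symm hy', hy⟩
          · refine ⟨γ • v, ?_, ?_⟩
            · exact hact γ (G.symm hy')
            · exact hact γ hy'
        rw [this] at hm
        exact hm
    · -- SurjOn nbhd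
      rintro ζ ⟨x, y, hx, rfl, hxy⟩
      obtain ⟨γ, rfl⟩ := mk_eq_iff.mp hx
      refine ⟨γ⁻¹ • y, ?_, ?_⟩
      · have := hact γ⁻¹ hxy
        simpa [nbhd] using this
      · exact mk_eq_iff.mpr ⟨γ⁻¹, rfl⟩
    · -- MapsTo nbhd2
      rintro z ⟨y, hy1, hy2⟩
      exact ⟨Quotient.mk _ y, ⟨v, y, rfl, rfl, hy1⟩, ⟨y, z, rfl, rfl, hy2⟩⟩
    · -- InjOn nbhd2
      intro z hz z' hz' heq
      obtain ⟨γ, rfl⟩ := mk_eq_iff.mp heq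
      by_cases hγ : γ = 1
      · rw [hγ, one_smul]
      · exfalso
        have := hcond v γ hγ
        have hm : γ • z' ∈ nbhd2 G v ∩ nbhd2 G (γ • v) := by
          refine ⟨hz, ?_⟩
          obtain ⟨y, hy1, hy2⟩ := hz'
          exact ⟨γ • y, hact γ hy1, hact γ hy2⟩
        rw [this] at hm
        exact hm
    · -- SurjOn nbhd2
      rintro ζ ⟨β, ⟨x, y, hx, hy, hxy⟩, ⟨y', z, hy', rfl, hyz⟩⟩
      obtain ⟨γ₁, rfl⟩ := mk_eq_iff.mp hx
      have hy2 : Quotient.mk (MulAction.orbitRel Γ G.V) y' =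
          Quotient.mk (MulAction.orbitRel Γ G.V) y := by rw [hy, hy']
      obtain ⟨γ₂, rfl⟩ := mk_eq_iff.mp hy2
      refine ⟨γ₁⁻¹ • (γ₂⁻¹ • z), ⟨γ₁⁻¹ • y, ?_, ?_⟩, ?_⟩
      · have := hact γ₁⁻¹ hxy
        simpa using this
      · have h1 : G.E y (γ₂⁻¹ • z) := by
          have := hact γ₂⁻¹ hyz
          simpa using this
        exact hact γ₁⁻¹ h1
      · exact mk_eq_iff.mpr ⟨γ₁⁻¹ * γ₂⁻¹, mul_smul _ _ _⟩
end
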